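/- arXiv:1606.03944 — 3 statements merged into one kernel-verified Lean document; each statement's English description precedes it below -/
import Mathlib

section
/- Let m > 0, c > 0, and let f : ℝ³ \ {0} → ℝ be given by f(x) = 1 + m/(2|x|). Let F_c(u,v) = (c·cosh(v)·cos(u), c·cosh(v)·sin(u), c·v) and n_c(u,v) = cosh(v)^{-1}·(cos(u), sin(u), −sinh(v)). Then for all (u,v) ∈ ℝ², n_c(u,v) · ∇f(F_c(u,v)) = −(m/(2c²)) · (1 − v·tanh(v)) / (cosh²(v) + v²)^{3/2}. -/
open RealInnerProductSpace

/-- A point of Euclidean ℝ³. -/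
noncomputable def vec3 (a b c : ℝ) : EuclideanSpace ℝ (Fin 3) :=
  (WithLp.equiv 2 (Fin 3 → ℝ)).symm ![a, b, c]

lemma grad_schw (m : ℝ) (x : EuclideanSpace ℝ (Fin 3)) (hx : x ≠ 0) :
    HasGradientAt (fun x : EuclideanSpace ℝ (Fin 3) => 1 + m / (2 * ‖x‖))
      ((-(m/2) * (‖x‖^3)⁻¹) • x) x := by
  have hnx : ‖x‖ ≠ 0 := norm_ne_zero_iff.mpr hx
  have hnpos : 0 < ‖x‖ := norm_pos_iff.mpr hx
  set t₀ : ℝ := ⟪x, x⟫ with ht₀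
  have ht0 : t₀ ≠ 0 := by
    rw [ht₀, real_inner_self_eq_norm_mul_norm]
    exact mul_ne_zero hnx hnx
  have hsq : Real.sqrt t₀ = ‖x‖ := by
    rw [ht₀, real_inner_self_eq_norm_mul_norm, Real.sqrt_mul_self (norm_nonneg _)]
  -- derivative of inner
  have hQ := (hasFDerivAt_id x).inner ℝ (hasFDerivAt_id x)
  have hsqrt := (Real.hasDerivAt_sqrt ht0).const_mul (2:ℝ)
  have hden : (2:ℝ) * Real.sqrt t₀ ≠ 0 := by simp [hsq, hnx]
  have hS := ((hasDerivAt_const t₀ m).div hsqrt hden).const_add (1:ℝ)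
  have hC := hS.comp_hasFDerivAt x hQ
  have hfun : (fun z : EuclideanSpace ℝ (Fin 3) => 1 + m / (2 * Real.sqrt ⟪z, z⟫))
      = (fun z => 1 + m / (2 * ‖z‖)) := by
    funext z
    rw [real_inner_self_eq_norm_mul_norm, Real.sqrt_mul_self (norm_nonneg _)]
  simp only [Function.comp_def, id_eq, Pi.div_apply] at hC
  rw [hfun] at hC
  rw [hasGradientAt_iff_hasFDerivAt]
  refine hC.congr_fderiv ?_
  ext y
  simp only [ContinuousLinearMap.coe_smul', Pi.smul_apply, ContinuousLinearMap.coe_comp',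
    Function.comp_apply, ContinuousLinearMap.prod_apply, ContinuousLinearMap.coe_id', id_eq,
    fderivInnerCLM_apply, smul_eq_mul, InnerProductSpace.toDual_apply_apply,
    real_inner_smul_left]
  rw [real_inner_comm y x, hsq]
  have h3 : ‖x‖^3 ≠ 0 := by positivity
  field_simp
  ring

theorem normal_dot_grad_schwarzschild_factor (m c : ℝ) (hm : 0 < m) (hc : 0 < c) :
    ∀ u v : ℝ,
      ⟪vec3 ((Real.cosh v)⁻¹ * Real.cos u) ((Real.cosh v)⁻¹ * Real.sin u)
          ((Real.cosh v)⁻¹ * (-Real.sinh v)),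
        gradient (fun x : EuclideanSpace ℝ (Fin 3) => 1 + m / (2 * ‖x‖))
          (vec3 (c * Real.cosh v * Real.cos u) (c * Real.cosh v * Real.sin u) (c * v))⟫
      = -(m / (2 * c ^ 2)) * (1 - v * Real.tanh v)
          / (Real.cosh v ^ 2 + v ^ 2) ^ ((3 : ℝ) / 2) := by
  intro u v
  have hch : (0:ℝ) < Real.cosh v := Real.cosh_pos v
  set A : ℝ := Real.cosh v ^ 2 + v ^ 2 with hA
  have hApos : 0 < A := by positivity
  set x₀ := vec3 (c * Real.cosh v * Real.cos u) (c * Real.cosh v * Real.sin u) (c * v) with hx₀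
  have hnorm : ‖x₀‖ = c * Real.sqrt A := by
    rw [hx₀, EuclideanSpace.norm_eq]
    simp only [vec3, WithLp.equiv_symm_apply, WithLp.ofLp_toLp, Fin.sum_univ_three, Matrix.cons_val_zero,
      Matrix.cons_val_one, Matrix.head_cons, Matrix.cons_val_two, Matrix.tail_cons,
      Real.norm_eq_abs, sq_abs]
    rw [show (c*Real.cosh v*Real.cos u)^2 + (c*Real.cosh v*Real.sin u)^2 + (c*v)^2 = c^2 * A by
      have := Real.sin_sq_add_cos_sq u; rw [hA]; nlinarith]
    rw [Real.sqrt_mul (sq_nonneg c), Real.sqrt_sq hc.le]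
  have hsA : (0:ℝ) < Real.sqrt A := Real.sqrt_pos.mpr hApos
  have hx0 : x₀ ≠ 0 := by
    rw [← norm_ne_zero_iff, hnorm]; positivity
  rw [(grad_schw m x₀ hx0).gradient, real_inner_smul_right]
  have hinner : ⟪vec3 ((Real.cosh v)⁻¹ * Real.cos u) ((Real.cosh v)⁻¹ * Real.sin u)
      ((Real.cosh v)⁻¹ * (-Real.sinh v)), x₀⟫ = c * (1 - v * Real.tanh v) := by
    rw [hx₀]
    simp only [vec3, PiLp.inner_apply, WithLp.equiv_symm_apply, WithLp.ofLp_toLp, Fin.sum_univ_three,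
      Matrix.cons_val_zero, Matrix.cons_val_one, Matrix.head_cons, Matrix.cons_val_two,
      Matrix.tail_cons, RCLike.inner_apply, conj_trivial, Real.tanh_eq_sinh_div_cosh]
    have := Real.sin_sq_add_cos_sq u
    field_simp
    linear_combination (Real.cosh v) * this
  rw [hinner, hnorm]
  have h32 : (c * Real.sqrt A) ^ 3 = c^3 * A ^ ((3:ℝ)/2) := by
    rw [mul_pow, Real.sqrt_eq_rpow, ← Real.rpow_natCast (A ^ ((1:ℝ)/2)) 3,
      ← Real.rpow_mul hApos.le]
    norm_num
  rw [h32]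
  have hA32 : (0:ℝ) < A ^ ((3:ℝ)/2) := Real.rpow_pos_of_pos hApos _
  field_simp
end

section
/- There exists a constant C > 0 such that for all c ≥ 1 and all m ∈ (0,1], letting f(x) = 1 + m/(2|x|), F_c(u,v) = (c·cosh(v)·cos(u), c·cosh(v)·sin(u), c·v), n_c(u,v) = cosh(v)^{-1}·(cos(u), sin(u), −sinh(v)), ψ₀(v) = 1 − v·tanh(v), and A = π·∫_ℝ (1 − v·tanh(v))²·cosh²(v)·(cosh²(v)+v²)^{-3/2} dv, one has | ∫_{[0,2π]×ℝ} ψ₀(v) · (n_c(u,v) · ∇ log f (F_c(u,v))) · c²·cosh²(v) du dv + A·m | ≤ C·m²/c. -/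
open RealInnerProductSpace

open Real MeasureTheory

section FluxAux

lemma inner_vec3 (a b c d e f : ℝ) :
    ⟪vec3 a b c, vec3 d e f⟫ = a * d + b * e + c * f := by
  simp [vec3, PiLp.inner_apply, Fin.sum_univ_three, RCLike.inner_apply]
  ring

lemma norm_vec3 (a b c : ℝ) : ‖vec3 a b c‖ = Real.sqrt (a ^ 2 + b ^ 2 + c ^ 2) := by
  simp [vec3, EuclideanSpace.norm_eq, Fin.sum_univ_three, sq_abs]

lemma hasGradientAt_logf (m : ℝ) (hm : 0 ≤ m) (x : EuclideanSpace ℝ (Fin 3)) (hx : x ≠ 0) :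
    HasGradientAt (fun y : EuclideanSpace ℝ (Fin 3) => Real.log (1 + m / (2 * ‖y‖)))
      ((-m / (2 * ‖x‖ ^ 3 * (1 + m / (2 * ‖x‖)))) • x) x := by
  have hnx : 0 < ‖x‖ := norm_pos_iff.mpr hx
  set t := ‖x‖ ^ 2 with ht
  have htpos : 0 < t := by positivity
  have hst : Real.sqrt t = ‖x‖ := Real.sqrt_sq (norm_nonneg x)
  have hspos : 0 < Real.sqrt t := by rw [hst]; exact hnx
  have h1 : HasDerivAt (fun t : ℝ => 2 * Real.sqrt t) (2 * (1 / (2 * Real.sqrt t))) t :=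
    (Real.hasDerivAt_sqrt htpos.ne').const_mul 2
  have h2 : HasDerivAt (fun t : ℝ => m / (2 * Real.sqrt t))
      (m * (-(2 * (1 / (2 * Real.sqrt t))) / (2 * Real.sqrt t) ^ 2)) t := by
    simpa [div_eq_mul_inv] using (h1.inv (by positivity)).const_mul m
  have h3 : HasDerivAt (fun t : ℝ => 1 + m / (2 * Real.sqrt t))
      (m * (-(2 * (1 / (2 * Real.sqrt t))) / (2 * Real.sqrt t) ^ 2)) t :=
    h2.const_add 1
  have hfpos : 0 < 1 + m / (2 * Real.sqrt t) := by positivity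
  have h4 := h3.log hfpos.ne'
  have hsq : HasFDerivAt (fun y : EuclideanSpace ℝ (Fin 3) => ‖y‖ ^ 2)
      (2 • (innerSL ℝ x)) x := (hasStrictFDerivAt_norm_sq x).hasFDerivAt
  have hcomp := h4.comp_hasFDerivAt x hsq
  rw [hasGradientAt_iff_hasFDerivAt]
  have key : (InnerProductSpace.toDual ℝ (EuclideanSpace ℝ (Fin 3)))
      ((-m / (2 * ‖x‖ ^ 3 * (1 + m / (2 * ‖x‖)))) • x)
      = (m * (-(2 * (1 / (2 * Real.sqrt t))) / (2 * Real.sqrt t) ^ 2)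
          / (1 + m / (2 * Real.sqrt t))) • (2 • (innerSL ℝ x)) := by
    ext y
    simp only [InnerProductSpace.toDual_apply_apply, real_inner_smul_left,
      ContinuousLinearMap.smul_apply, ContinuousLinearMap.coe_smul', Pi.smul_apply,
      innerSL_apply_apply, smul_eq_mul]
    rw [hst]
    have hfpos' : 0 < 1 + m / (2 * ‖x‖) := by positivity
    field_simp
    ring
  rw [key]
  exact hcomp.congr_of_eventuallyEq (Filter.Eventually.of_forall fun y => by
    simp [Function.comp_def, Real.sqrt_sq (norm_nonneg y)])

noncomputable def gfun (v : ℝ) : ℝ :=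
  (1 - v * Real.tanh v) ^ 2 * Real.cosh v ^ 2 / (Real.cosh v ^ 2 + v ^ 2) ^ ((3 : ℝ) / 2)

noncomputable def qfun (m c v : ℝ) : ℝ :=
  gfun v / (1 + m / (2 * (c * Real.sqrt (Real.cosh v ^ 2 + v ^ 2))))

lemma gfun_nonneg (v : ℝ) : 0 ≤ gfun v := by
  unfold gfun
  have h : (0:ℝ) < Real.cosh v ^ 2 + v ^ 2 := by positivity
  positivity

lemma rpow_32_eq (X : ℝ) (hX : 0 < X) : X ^ ((3:ℝ)/2) = Real.sqrt X ^ 3 := by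
  rw [Real.sqrt_eq_rpow, ← Real.rpow_natCast (X ^ ((1:ℝ)/2)) 3, ← Real.rpow_mul hX.le]
  norm_num

lemma cosh_cube_le (v : ℝ) :
    Real.cosh v ^ 3 ≤ (Real.cosh v ^ 2 + v ^ 2) ^ ((3:ℝ)/2) := by
  have hc := Real.cosh_pos v
  have h1 : (Real.cosh v ^ 2 : ℝ) ^ ((3:ℝ)/2) = Real.cosh v ^ 3 := by
    rw [← Real.rpow_natCast (Real.cosh v) 2, ← Real.rpow_mul hc.le,
      show ((2:ℕ):ℝ) * ((3:ℝ)/2) = ((3:ℕ):ℝ) by norm_num, Real.rpow_natCast]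
  rw [← h1]
  exact Real.rpow_le_rpow (by positivity) (by nlinarith [sq_nonneg v]) (by norm_num)

lemma abs_tanh_le_one (v : ℝ) : |Real.tanh v| ≤ 1 := by
  rw [Real.tanh_eq_sinh_div_cosh, abs_div, abs_of_pos (Real.cosh_pos v),
    div_le_one (Real.cosh_pos v)]
  have h1 := Real.cosh_sub_sinh v
  have h2 := Real.cosh_add_sinh v
  have e1 := Real.exp_pos (-v)
  have e2 := Real.exp_pos v
  rcases le_or_gt 0 (Real.sinh v) with hs | hs
  · rw [abs_of_nonneg hs]; linarith
  · rw [abs_of_neg hs]; linarith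

lemma cosh_ge_quartic (v : ℝ) : v ^ 4 ≤ 512 * Real.cosh v := by
  have h1 : Real.exp |v| ≤ 2 * Real.cosh v := by
    rw [← Real.cosh_abs, Real.cosh_eq]
    have := Real.exp_pos (-|v|); linarith
  have h2 : (1 + |v| / 4) ^ 4 ≤ Real.exp |v| := by
    have h3 := Real.add_one_le_exp (|v| / 4)
    calc (1 + |v| / 4) ^ 4 ≤ Real.exp (|v| / 4) ^ 4 := by
          apply pow_le_pow_left₀ (by positivity) (by linarith)
      _ = Real.exp |v| := by rw [← Real.exp_nat_mul]; congr 1; push_cast; ring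
  have h4 : (|v| / 4) ^ 4 ≤ (1 + |v| / 4) ^ 4 :=
    pow_le_pow_left₀ (by positivity) (by linarith) 4
  have h5 : (|v| / 4) ^ 4 = v ^ 4 / 256 := by
    rw [div_pow, ← abs_pow, abs_of_nonneg (by positivity)]; norm_num
  linarith [h5 ▸ h4, h2, h1]

lemma gfun_le (v : ℝ) : gfun v ≤ 3078 * (1 + v ^ 2)⁻¹ := by
  have hc := Real.cosh_pos v
  have h1c := Real.one_le_cosh v
  have hq := cosh_ge_quartic v
  have hden := cosh_cube_le v
  have hdpos : (0:ℝ) < (Real.cosh v ^ 2 + v ^ 2) ^ ((3:ℝ)/2) := by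
    have : (0:ℝ) < Real.cosh v ^ 2 + v ^ 2 := by positivity
    positivity
  have hnum : (1 - v * Real.tanh v) ^ 2 * Real.cosh v ^ 2 ≤ (1 + |v|) ^ 2 * Real.cosh v ^ 2 := by
    have h6 : |1 - v * Real.tanh v| ≤ 1 + |v| := by
      calc |1 - v * Real.tanh v| ≤ |(1:ℝ)| + |v * Real.tanh v| := abs_sub _ _
        _ ≤ 1 + |v| := by
            rw [abs_one, abs_mul]
            have := abs_tanh_le_one v
            nlinarith [abs_nonneg v, abs_nonneg (Real.tanh v)]
    have : (1 - v * Real.tanh v) ^ 2 ≤ (1 + |v|) ^ 2 := by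
      rw [← sq_abs (1 - v * Real.tanh v)]
      exact pow_le_pow_left₀ (abs_nonneg _) h6 2
    nlinarith [sq_nonneg (Real.cosh v)]
  have step1 : gfun v ≤ (1 + |v|) ^ 2 * Real.cosh v ^ 2 / (Real.cosh v ^ 3) := by
    unfold gfun
    exact div_le_div₀ (by positivity) hnum (by positivity) hden
  refine step1.trans ?_
  have hpoly : (1 + |v|) ^ 2 * (1 + v ^ 2) ≤ 3078 * Real.cosh v := by
    have hv2 : v ^ 2 = |v| ^ 2 := (sq_abs v).symm
    have hv4 : v ^ 4 = |v| ^ 4 := by rw [← abs_pow, abs_of_nonneg (by positivity)]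
    nlinarith [abs_nonneg v, sq_nonneg (|v| - 1), sq_nonneg (|v| * (|v| - 1)),
      sq_nonneg (|v| ^ 2 - 1)]
  rw [div_le_iff₀ (by positivity), mul_comm (3078:ℝ) _, mul_assoc,
    inv_mul_eq_div, le_div_iff₀ (by positivity)]
  nlinarith [mul_le_mul_of_nonneg_right hpoly (sq_nonneg (Real.cosh v))]

lemma continuous_gfun : Continuous gfun := by
  unfold gfun
  apply Continuous.div
  · have htanh : Continuous Real.tanh := by
      have : Real.tanh = fun x => Real.sinh x / Real.cosh x :=
        funext fun x => Real.tanh_eq_sinh_div_cosh x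
      rw [this]
      exact Real.continuous_sinh.div Real.continuous_cosh fun x => (Real.cosh_pos x).ne'
    exact ((continuous_const.sub (continuous_id.mul htanh)).pow 2).mul
      (Real.continuous_cosh.pow 2)
  · apply Continuous.rpow_const (by fun_prop)
    intro v; left; positivity
  · intro v; positivity

lemma integrable_gfun : Integrable gfun := by
  refine Integrable.mono' (integrable_inv_one_add_sq.const_mul 3078)
    continuous_gfun.aestronglyMeasurable (Filter.Eventually.of_forall fun v => ?_)
  rw [Real.norm_eq_abs, abs_of_nonneg (gfun_nonneg v)]
  exact gfun_le v

lemma one_le_sroot (v : ℝ) : 1 ≤ Real.sqrt (Real.cosh v ^ 2 + v ^ 2) := by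
  calc (1:ℝ) = Real.sqrt 1 := Real.sqrt_one.symm
    _ ≤ Real.sqrt (Real.cosh v ^ 2 + v ^ 2) :=
        Real.sqrt_le_sqrt (by nlinarith [Real.one_le_cosh v, sq_nonneg v])

lemma integrand_eq (m c : ℝ) (hm : 0 < m) (hc0 : 0 < c) (u v : ℝ) :
    (1 - v * Real.tanh v) *
        ⟪vec3 ((Real.cosh v)⁻¹ * Real.cos u) ((Real.cosh v)⁻¹ * Real.sin u)
            ((Real.cosh v)⁻¹ * (-Real.sinh v)),
          gradient (fun x : EuclideanSpace ℝ (Fin 3) => Real.log (1 + m / (2 * ‖x‖)))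
            (vec3 (c * Real.cosh v * Real.cos u) (c * Real.cosh v * Real.sin u) (c * v))⟫ *
        (c ^ 2 * Real.cosh v ^ 2)
      = -(m / 2) * qfun m c v := by
  have hcosh := Real.cosh_pos v
  have hXpos : (0:ℝ) < Real.cosh v ^ 2 + v ^ 2 := by positivity
  set s : ℝ := Real.sqrt (Real.cosh v ^ 2 + v ^ 2) with hs_def
  have hspos : 0 < s := Real.sqrt_pos.mpr hXpos
  have hs1 : 1 ≤ s := one_le_sroot v
  have hF : ‖vec3 (c * Real.cosh v * Real.cos u) (c * Real.cosh v * Real.sin u) (c * v)‖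
      = c * s := by
    rw [norm_vec3,
      show (c * Real.cosh v * Real.cos u) ^ 2 + (c * Real.cosh v * Real.sin u) ^ 2
          + (c * v) ^ 2 = c ^ 2 * (Real.cosh v ^ 2 + v ^ 2) by
        linear_combination (c ^ 2 * Real.cosh v ^ 2) * Real.sin_sq_add_cos_sq u,
      Real.sqrt_mul (sq_nonneg c), Real.sqrt_sq hc0.le]
  have hFpos : 0 < ‖vec3 (c * Real.cosh v * Real.cos u) (c * Real.cosh v * Real.sin u)
      (c * v)‖ := by rw [hF]; positivity
  have hFne := norm_pos_iff.mp hFpos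
  have hgrad := (hasGradientAt_logf m hm.le _ hFne).gradient
  rw [hgrad, real_inner_smul_right, inner_vec3, hF]
  have hinner : (Real.cosh v)⁻¹ * Real.cos u * (c * Real.cosh v * Real.cos u)
      + (Real.cosh v)⁻¹ * Real.sin u * (c * Real.cosh v * Real.sin u)
      + (Real.cosh v)⁻¹ * (-Real.sinh v) * (c * v)
      = c * (1 - v * Real.tanh v) := by
    rw [Real.tanh_eq_sinh_div_cosh]
    field_simp
    linear_combination (Real.cosh v) * Real.sin_sq_add_cos_sq u
  rw [hinner]
  unfold qfun gfun
  rw [rpow_32_eq _ hXpos, ← hs_def]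
  have hfpos : (0:ℝ) < 1 + m / (2 * (c * s)) := by positivity
  field_simp

end FluxAux

theorem flux_integral_expansion :
    ∃ C > 0, ∀ c : ℝ, 1 ≤ c → ∀ m : ℝ, 0 < m → m ≤ 1 →
      |(∫ p in (Set.Icc (0 : ℝ) (2 * Real.pi)) ×ˢ (Set.univ : Set ℝ),
          (1 - p.2 * Real.tanh p.2) *
            ⟪vec3 ((Real.cosh p.2)⁻¹ * Real.cos p.1) ((Real.cosh p.2)⁻¹ * Real.sin p.1)
                ((Real.cosh p.2)⁻¹ * (-Real.sinh p.2)),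
              gradient (fun x : EuclideanSpace ℝ (Fin 3) => Real.log (1 + m / (2 * ‖x‖)))
                (vec3 (c * Real.cosh p.2 * Real.cos p.1) (c * Real.cosh p.2 * Real.sin p.1)
                  (c * p.2))⟫ *
            (c ^ 2 * Real.cosh p.2 ^ 2))
        + (Real.pi * ∫ v : ℝ,
            (1 - v * Real.tanh v) ^ 2 * Real.cosh v ^ 2
              / (Real.cosh v ^ 2 + v ^ 2) ^ ((3 : ℝ) / 2)) * m|
      ≤ C * m ^ 2 / c := by
  have hIg0 : 0 ≤ ∫ v, gfun v := integral_nonneg gfun_nonneg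
  refine ⟨Real.pi / 2 * (∫ v, gfun v) + 1, by nlinarith [Real.pi_pos], ?_⟩
  intro c hc m hm hm1
  have hc0 : 0 < c := lt_of_lt_of_le one_pos hc
  have hfden1 : ∀ v, 1 ≤ 1 + m / (2 * (c * Real.sqrt (Real.cosh v ^ 2 + v ^ 2))) := fun v =>
    le_add_of_nonneg_right (div_nonneg hm.le (by positivity))
  have hfdenpos : ∀ v, (0:ℝ) < 1 + m / (2 * (c * Real.sqrt (Real.cosh v ^ 2 + v ^ 2))) :=
    fun v => lt_of_lt_of_le one_pos (hfden1 v)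
  -- q is between 0 and g
  have hq_nonneg : ∀ v, 0 ≤ qfun m c v := fun v =>
    div_nonneg (gfun_nonneg v) (hfdenpos v).le
  have hq_le : ∀ v, qfun m c v ≤ gfun v := fun v =>
    div_le_self (gfun_nonneg v) (hfden1 v)
  -- integrability of q
  have hqcont : Continuous (qfun m c) := by
    unfold qfun
    refine continuous_gfun.div ?_ fun v => (hfdenpos v).ne'
    refine continuous_const.add (continuous_const.div ?_ fun v => ?_)
    · exact continuous_const.mul (continuous_const.mul
        (Real.continuous_sqrt.comp (by fun_prop)))
    · positivity
  have hIq : Integrable (qfun m c) := by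
    refine integrable_gfun.mono' hqcont.aestronglyMeasurable
      (Filter.Eventually.of_forall fun v => ?_)
    rw [Real.norm_eq_abs, abs_of_nonneg (hq_nonneg v)]
    exact hq_le v
  -- rewrite the double integral
  have hprod : (∫ p in (Set.Icc (0 : ℝ) (2 * Real.pi)) ×ˢ (Set.univ : Set ℝ),
          (1 - p.2 * Real.tanh p.2) *
            ⟪vec3 ((Real.cosh p.2)⁻¹ * Real.cos p.1) ((Real.cosh p.2)⁻¹ * Real.sin p.1)
                ((Real.cosh p.2)⁻¹ * (-Real.sinh p.2)),
              gradient (fun x : EuclideanSpace ℝ (Fin 3) => Real.log (1 + m / (2 * ‖x‖)))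
                (vec3 (c * Real.cosh p.2 * Real.cos p.1) (c * Real.cosh p.2 * Real.sin p.1)
                  (c * p.2))⟫ *
            (c ^ 2 * Real.cosh p.2 ^ 2))
      = (2 * Real.pi) * (-(m / 2) * ∫ v, qfun m c v) := by
    have hfe : (fun p : ℝ × ℝ =>
        (1 - p.2 * Real.tanh p.2) *
            ⟪vec3 ((Real.cosh p.2)⁻¹ * Real.cos p.1) ((Real.cosh p.2)⁻¹ * Real.sin p.1)
                ((Real.cosh p.2)⁻¹ * (-Real.sinh p.2)),
              gradient (fun x : EuclideanSpace ℝ (Fin 3) => Real.log (1 + m / (2 * ‖x‖)))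
                (vec3 (c * Real.cosh p.2 * Real.cos p.1) (c * Real.cosh p.2 * Real.sin p.1)
                  (c * p.2))⟫ *
            (c ^ 2 * Real.cosh p.2 ^ 2))
        = fun p : ℝ × ℝ => (1:ℝ) * (-(m / 2) * qfun m c p.2) := by
      funext p
      rw [one_mul]
      exact integrand_eq m c hm hc0 p.1 p.2
    rw [hfe, MeasureTheory.Measure.volume_eq_prod,
      setIntegral_prod_mul (fun _ : ℝ => (1:ℝ)) (fun v : ℝ => -(m / 2) * qfun m c v)]
    rw [Measure.restrict_univ, MeasureTheory.integral_const_mul]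
    have h1 : (∫ _ in Set.Icc (0:ℝ) (2 * Real.pi), (1:ℝ)) = 2 * Real.pi := by
      simp [Real.volume_Icc, ENNReal.toReal_ofReal (by positivity : (0:ℝ) ≤ 2 * Real.pi), Real.pi_pos.le]
    rw [h1]
  rw [hprod,
    show (∫ v : ℝ, (1 - v * Real.tanh v) ^ 2 * Real.cosh v ^ 2
        / (Real.cosh v ^ 2 + v ^ 2) ^ ((3 : ℝ) / 2)) = ∫ v, gfun v from rfl]
  -- algebraic recombination
  have hE : 2 * Real.pi * (-(m / 2) * ∫ v, qfun m c v) + (Real.pi * ∫ v, gfun v) * m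
      = Real.pi * m * ∫ v, (gfun v - qfun m c v) := by
    rw [integral_sub integrable_gfun hIq]; ring
  rw [hE]
  -- bounds on the remaining integral
  have hD0 : 0 ≤ ∫ v, (gfun v - qfun m c v) :=
    integral_nonneg fun v => sub_nonneg.mpr (hq_le v)
  have hptle : ∀ v, gfun v - qfun m c v ≤ m / (2 * c) * gfun v := by
    intro v
    set fd : ℝ := 1 + m / (2 * (c * Real.sqrt (Real.cosh v ^ 2 + v ^ 2))) with hfd
    have h1 : 1 - fd⁻¹ ≤ m / (2 * c) := by
      have hfd1 : 1 ≤ fd := hfden1 v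
      have hfdpos : 0 < fd := hfdenpos v
      have e1 : 1 - fd⁻¹ = (fd - 1) / fd := by field_simp
      have e2 : (fd - 1) / fd ≤ fd - 1 := div_le_self (by linarith) hfd1
      have e3 : fd - 1 = m / (2 * (c * Real.sqrt (Real.cosh v ^ 2 + v ^ 2))) := by
        rw [hfd]; ring
      have e4 : m / (2 * (c * Real.sqrt (Real.cosh v ^ 2 + v ^ 2))) ≤ m / (2 * c) := by
        apply div_le_div_of_nonneg_left hm.le (by positivity)
        have := one_le_sroot v
        nlinarith
      rw [e1]; linarith [e2, e3 ▸ e4]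
    have e5 : gfun v - qfun m c v = gfun v * (1 - fd⁻¹) := by
      unfold qfun
      rw [← hfd, div_eq_mul_inv]; ring
    rw [e5, mul_comm (m / (2 * c)) (gfun v)]
    exact mul_le_mul_of_nonneg_left h1 (gfun_nonneg v)
  have hDle : (∫ v, (gfun v - qfun m c v)) ≤ m / (2 * c) * ∫ v, gfun v := by
    calc (∫ v, (gfun v - qfun m c v)) ≤ ∫ v, m / (2 * c) * gfun v :=
          integral_mono (integrable_gfun.sub hIq) (integrable_gfun.const_mul _) hptle
      _ = m / (2 * c) * ∫ v, gfun v := MeasureTheory.integral_const_mul _ _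
  rw [abs_of_nonneg (mul_nonneg (mul_nonneg Real.pi_pos.le hm.le) hD0)]
  calc Real.pi * m * ∫ v, (gfun v - qfun m c v)
      ≤ Real.pi * m * (m / (2 * c) * ∫ v, gfun v) :=
        mul_le_mul_of_nonneg_left hDle (by positivity)
    _ = (Real.pi / 2 * ∫ v, gfun v) * m ^ 2 / c := by field_simp
    _ ≤ (Real.pi / 2 * (∫ v, gfun v) + 1) * m ^ 2 / c := by
        gcongr
        linarith
end

section
/- Let η ∈ (0,1) and let Γ₀ : ℝ → ℝ be continuous with ∫_ℝ Γ₀(w)²·cosh(w)^{2η} dw < ∞. Let Ω₀ : ℝ → ℝ be a C² function with Ω₀''(v) = Γ₀(v) for all v and Ω₀(v) → 0 as v → ±∞. Then for every η' ∈ (0, η/4) there exists a constant C > 0 such that |Ω₀(v)| ≤ C·cosh(v)^{-(η−η')} for all v ∈ ℝ. -/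
section ZMhelpers
open Real MeasureTheory Set Filter intervalIntegral

lemma ZM.exp_integral {b : ℝ} (hb : 0 < b) (t : ℝ) :
    ∫ x in Ioi t, Real.exp (-b * x) = Real.exp (-b * t) / b := by
  have h : ∀ x ∈ Ioi t, HasDerivAt (fun x => -Real.exp (-b * x) / b) (Real.exp (-b * x)) x := by
    intro x _
    have h1 : HasDerivAt (fun x : ℝ => -b * x) (-b) x := by
      simpa using (hasDerivAt_id x).const_mul (-b)
    have := (h1.exp.neg.div_const b)
    refine this.congr_deriv ?_
    rw [mul_neg, neg_neg, mul_div_assoc, div_self hb.ne', mul_one]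
  have hcont : ContinuousWithinAt (fun x => -Real.exp (-b * x) / b) (Ici t) t :=
    (Continuous.continuousWithinAt (by fun_prop))
  have hlim : Tendsto (fun x => -Real.exp (-b * x) / b) atTop (nhds 0) := by
    have h2 : Tendsto (fun x : ℝ => -b * x) atTop atBot :=
      tendsto_id.const_mul_atTop_of_neg (by linarith)
    have := (Real.tendsto_exp_atBot.comp h2).neg.div_const b
    simpa using this
  have := MeasureTheory.integral_Ioi_of_hasDerivAt_of_tendsto hcont h
      (exp_neg_integrableOn_Ioi t hb) hlim
  rw [this]; ring

lemma ZM.cosh_le_exp_abs (v : ℝ) : Real.cosh v ≤ Real.exp |v| := by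
  rw [Real.cosh_eq]
  have h1 : Real.exp v ≤ Real.exp |v| := Real.exp_le_exp.mpr (le_abs_self v)
  have h2 : Real.exp (-v) ≤ Real.exp |v| := Real.exp_le_exp.mpr (neg_le_abs v)
  linarith

lemma ZM.amgm (a l : ℝ) (hl : 0 < l) : a ≤ (l * a ^ 2 + 1 / l) / 2 := by
  have h := sq_nonneg (l * a - 1)
  have h3 : l * (1 / l) = 1 := by field_simp
  nlinarith [mul_pos hl hl, h, h3]

lemma ZM.cosh_rpow_lb (η : ℝ) (hη : 0 < η) (hη1 : η < 1) (w : ℝ) :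
    Real.exp (2 * η * w) / 4 ≤ Real.cosh w ^ (2 * η) := by
  have h1 : Real.exp w / 2 ≤ Real.cosh w := by
    rw [Real.cosh_eq]; have := (Real.exp_pos (-w)).le; linarith
  have h2 : (Real.exp w / 2) ^ (2 * η) ≤ Real.cosh w ^ (2 * η) :=
    Real.rpow_le_rpow (by positivity) h1 (by linarith)
  refine le_trans ?_ h2
  rw [Real.div_rpow (Real.exp_pos w).le (by norm_num)]
  have h3 : (Real.exp w) ^ (2 * η) = Real.exp (2 * η * w) := by
    rw [Real.rpow_def_of_pos (Real.exp_pos w), Real.log_exp]; ring_nf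
  rw [h3]
  have h4 : (2 : ℝ) ^ (2 * η) ≤ 4 := by
    have := Real.rpow_le_rpow_of_exponent_le (by norm_num : (1:ℝ) ≤ 2)
      (by linarith : 2 * η ≤ (2 : ℝ))
    calc (2:ℝ) ^ (2*η) ≤ (2:ℝ) ^ (2:ℝ) := this
      _ = 4 := by
        rw [show (2:ℝ) = ((2:ℕ):ℝ) from by norm_num, Real.rpow_natCast]; norm_num
  apply div_le_div_of_nonneg_left (Real.exp_pos _).le (by positivity) h4

lemma ZM.tail (η : ℝ) (hη : 0 < η) (hη1 : η < 1) (Γ₀ : ℝ → ℝ) (hcont : Continuous Γ₀)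
    (hint : Integrable (fun w : ℝ => Γ₀ w ^ 2 * Real.cosh w ^ (2 * η))) :
    ∃ K > 0, ∀ t : ℝ, IntegrableOn Γ₀ (Ioi t) ∧
      (∫ w in Ioi t, |Γ₀ w|) ≤ K * Real.exp (-(η * t)) := by
  set M : ℝ := ∫ w : ℝ, Γ₀ w ^ 2 * Real.cosh w ^ (2 * η) with hM
  have hMnn : 0 ≤ M := integral_nonneg fun w => by positivity
  refine ⟨M / 2 + 1 / η, by positivity, fun t => ?_⟩
  set g : ℝ → ℝ := fun w => Real.exp (-(η * t)) / 2 * (Γ₀ w ^ 2 * Real.cosh w ^ (2 * η))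
      + (2 * Real.exp (η * t)) * Real.exp (-(2 * η) * w) with hg
  have P : ∀ w, |Γ₀ w| ≤ g w := by
    intro w
    have hBpos : (0 : ℝ) < Real.cosh w ^ (2 * η) := Real.rpow_pos_of_pos (Real.cosh_pos w) _
    have hB4 := ZM.cosh_rpow_lb η hη hη1 w
    have hl : 0 < Real.exp (-(η * t)) * Real.cosh w ^ (2 * η) := by positivity
    have h1 := ZM.amgm (|Γ₀ w|) _ hl
    have e1 : Real.exp (-(η * t)) * Real.cosh w ^ (2 * η) * |Γ₀ w| ^ 2
        = Real.exp (-(η * t)) * (Γ₀ w ^ 2 * Real.cosh w ^ (2 * η)) := by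
      rw [sq_abs]; ring
    have e2 : 1 / (Real.exp (-(η * t)) * Real.cosh w ^ (2 * η))
        ≤ Real.exp (η * t) * (4 * Real.exp (-(2 * η) * w)) := by
      rw [div_le_iff₀ hl]
      have e3 : Real.exp (η * t) * (4 * Real.exp (-(2 * η) * w))
            * (Real.exp (-(η * t)) * Real.cosh w ^ (2 * η))
          = (Real.exp (η * t) * Real.exp (-(η * t)))
            * (4 * (Real.exp (-(2 * η) * w)) * Real.cosh w ^ (2 * η)) := by ring
      rw [e3, ← Real.exp_add, add_neg_cancel, Real.exp_zero, one_mul]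
      have e4 : Real.exp (-(2 * η) * w) * Real.exp (2 * η * w) = 1 := by
        rw [← Real.exp_add]; ring_nf; exact Real.exp_zero
      nlinarith [Real.exp_pos (-(2 * η) * w), hB4]
    rw [hg]
    simp only []
    nlinarith [h1, e1, e2]
  have hint1 : IntegrableOn (fun w : ℝ => Γ₀ w ^ 2 * Real.cosh w ^ (2 * η)) (Ioi t) :=
    hint.integrableOn
  have hint2 : IntegrableOn (fun w : ℝ => Real.exp (-(2 * η) * w)) (Ioi t) :=
    exp_neg_integrableOn_Ioi t (by positivity)
  have hgint : IntegrableOn g (Ioi t) := (hint1.const_mul _).add (hint2.const_mul _)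
  have hΓint : IntegrableOn Γ₀ (Ioi t) := by
    refine Integrable.mono hgint (hcont.aestronglyMeasurable.restrict) ?_
    filter_upwards with w
    rw [Real.norm_eq_abs, Real.norm_eq_abs]
    exact (P w).trans (le_abs_self _)
  refine ⟨hΓint, ?_⟩
  have step1 : (∫ w in Ioi t, |Γ₀ w|) ≤ ∫ w in Ioi t, g w :=
    integral_mono hΓint.abs hgint P
  have step2 : (∫ w in Ioi t, g w)
      = Real.exp (-(η * t)) / 2 * (∫ w in Ioi t, Γ₀ w ^ 2 * Real.cosh w ^ (2 * η))
        + (2 * Real.exp (η * t)) * ∫ w in Ioi t, Real.exp (-(2 * η) * w) := by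
    rw [hg, integral_add (hint1.const_mul _) (hint2.const_mul _),
      MeasureTheory.integral_const_mul, MeasureTheory.integral_const_mul]
  have step3 : (∫ w in Ioi t, Γ₀ w ^ 2 * Real.cosh w ^ (2 * η)) ≤ M :=
    setIntegral_le_integral hint (ae_of_all _ fun w => by positivity)
  have step4 : (∫ w in Ioi t, Real.exp (-(2 * η) * w)) = Real.exp (-(2 * η) * t) / (2 * η) :=
    ZM.exp_integral (by positivity) t
  have e5 : Real.exp (η * t) * Real.exp (-(2 * η) * t) = Real.exp (-(η * t)) := by
    rw [← Real.exp_add]; ring_nf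
  calc (∫ w in Ioi t, |Γ₀ w|) ≤ _ := step1
    _ = _ := step2
    _ ≤ Real.exp (-(η * t)) / 2 * M + (2 * Real.exp (η * t)) * (Real.exp (-(2 * η) * t) / (2 * η)) := by
        rw [step4]
        have := mul_le_mul_of_nonneg_left step3 (by positivity : (0:ℝ) ≤ Real.exp (-(η * t)) / 2)
        linarith
    _ = (M / 2 + 1 / η) * Real.exp (-(η * t)) := by
        have e6 : 2 * Real.exp (η * t) * (Real.exp (-(2 * η) * t) / (2 * η))
            = Real.exp (-(η * t)) / η := by
          rw [← e5]; field_simp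
        rw [e6]; ring

lemma ZM.one_sided (η : ℝ) (hη : 0 < η) (hη1 : η < 1) (Γ₀ : ℝ → ℝ) (hcont : Continuous Γ₀)
    (hint : Integrable (fun w : ℝ => Γ₀ w ^ 2 * Real.cosh w ^ (2 * η)))
    (Ω₀ : ℝ → ℝ) (hC2 : ContDiff ℝ 2 Ω₀)
    (hode : ∀ v : ℝ, deriv (deriv Ω₀) v = Γ₀ v)
    (htop : Tendsto Ω₀ atTop (nhds 0)) :
    ∃ C > 0, ∀ v : ℝ, |Ω₀ v| ≤ C * Real.exp (-(η * v)) := by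
  obtain ⟨K, hK, hTail⟩ := ZM.tail η hη hη1 Γ₀ hcont hint
  have hdiff : Differentiable ℝ Ω₀ := hC2.differentiable (by norm_num)
  have hd1 : ContDiff ℝ 1 (deriv Ω₀) :=
    (contDiff_succ_iff_deriv.mp (show ContDiff ℝ (1 + 1) Ω₀ by norm_num; exact hC2)).2.2
  have hddiff : Differentiable ℝ (deriv Ω₀) := hd1.differentiable (by norm_num)
  have hdc : Continuous (deriv Ω₀) := hd1.continuous
  have hHD : ∀ x : ℝ, HasDerivAt (deriv Ω₀) (Γ₀ x) x := fun x => by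
    have h := (hddiff x).hasDerivAt
    rwa [hode x] at h
  have FTC1 : ∀ a b : ℝ, ∫ x in a..b, Γ₀ x = deriv Ω₀ b - deriv Ω₀ a := fun a b =>
    integral_eq_sub_of_hasDerivAt (fun x _ => hHD x) (hcont.intervalIntegrable a b)
  have FTC0 : ∀ a b : ℝ, ∫ x in a..b, deriv Ω₀ x = Ω₀ b - Ω₀ a := fun a b =>
    integral_eq_sub_of_hasDerivAt (fun x _ => (hdiff x).hasDerivAt) (hdc.intervalIntegrable a b)
  set L : ℝ := deriv Ω₀ 0 + ∫ w in Ioi 0, Γ₀ w with hLdef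
  have hDL : Tendsto (deriv Ω₀) atTop (nhds L) := by
    have h := intervalIntegral_tendsto_integral_Ioi 0 (hTail 0).1 tendsto_id
    refine (tendsto_const_nhds.add h).congr fun t => ?_
    simp only [id_eq]
    rw [FTC1 0 t]; ring
  have hL0 : L = 0 := by
    have hg0 : Tendsto (fun v => Ω₀ (v + 1) - Ω₀ v) atTop (nhds 0) := by
      have h1 : Tendsto (fun v : ℝ => Ω₀ (v + 1)) atTop (nhds 0) :=
        htop.comp (tendsto_atTop_add_const_right atTop 1 tendsto_id)
      simpa using h1.sub htop
    have hgL : Tendsto (fun v => Ω₀ (v + 1) - Ω₀ v) atTop (nhds L) := by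
      rw [Metric.tendsto_atTop]
      intro ε hε
      rw [Metric.tendsto_atTop] at hDL
      obtain ⟨N, hN⟩ := hDL (ε / 2) (by linarith)
      refine ⟨N, fun v hv => ?_⟩
      have key : Ω₀ (v + 1) - Ω₀ v - L = ∫ x in v..(v + 1), (deriv Ω₀ x - L) := by
        rw [intervalIntegral.integral_sub (hdc.intervalIntegrable _ _)
          intervalIntegrable_const, FTC0]
        simp
      rw [Real.dist_eq, key]
      have hb : ∀ x ∈ Set.uIoc v (v + 1), ‖deriv Ω₀ x - L‖ ≤ ε / 2 := by
        intro x hx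
        rw [Set.uIoc_of_le (by linarith : v ≤ v + 1)] at hx
        have := hN x (le_trans hv hx.1.le)
        rw [Real.dist_eq] at this
        rw [Real.norm_eq_abs]; linarith
      have h3 := intervalIntegral.norm_integral_le_of_norm_le_const hb
      rw [Real.norm_eq_abs] at h3
      simp only [add_sub_cancel_left, abs_one, mul_one] at h3
      linarith
    exact tendsto_nhds_unique hgL hg0
  have hD : ∀ t : ℝ, deriv Ω₀ t = -∫ w in Ioi t, Γ₀ w := by
    intro t
    have h := intervalIntegral_tendsto_integral_Ioi t (hTail t).1 tendsto_id
    have h2 : Tendsto (fun T => ∫ x in t..T, Γ₀ x) atTop (nhds (0 - deriv Ω₀ t)) := by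
      have e : (fun T => ∫ x in t..T, Γ₀ x) = fun T => deriv Ω₀ T - deriv Ω₀ t :=
        funext fun T => FTC1 t T
      rw [e, ← hL0]
      exact hDL.sub_const _
    have := tendsto_nhds_unique h h2
    rw [this]; ring
  have hDbound : ∀ t : ℝ, |deriv Ω₀ t| ≤ K * Real.exp (-(η * t)) := by
    intro t
    rw [hD t, abs_neg]
    calc |∫ w in Ioi t, Γ₀ w| ≤ ∫ w in Ioi t, |Γ₀ w| := by
          simpa [Real.norm_eq_abs] using
            norm_integral_le_integral_norm (μ := volume.restrict (Ioi t)) Γ₀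
      _ ≤ _ := (hTail t).2
  have hDint : ∀ v : ℝ, IntegrableOn (deriv Ω₀) (Ioi v) := by
    intro v
    refine Integrable.mono ((exp_neg_integrableOn_Ioi v hη).const_mul K)
      (hdc.aestronglyMeasurable.restrict) ?_
    filter_upwards with t
    rw [Real.norm_eq_abs, Real.norm_eq_abs]
    refine (hDbound t).trans (le_of_eq ?_)
    rw [abs_of_nonneg (by positivity)]
    ring_nf
  have hOmega : ∀ v : ℝ, Ω₀ v = -∫ t in Ioi v, deriv Ω₀ t := by
    intro v
    have h := intervalIntegral_tendsto_integral_Ioi v (hDint v) tendsto_id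
    have h2 : Tendsto (fun T => ∫ x in v..T, deriv Ω₀ x) atTop (nhds (0 - Ω₀ v)) := by
      have e : (fun T => ∫ x in v..T, deriv Ω₀ x) = fun T => Ω₀ T - Ω₀ v :=
        funext fun T => FTC0 v T
      rw [e]
      exact htop.sub_const _
    have := tendsto_nhds_unique h h2
    rw [this]; ring
  refine ⟨K / η, by positivity, fun v => ?_⟩
  rw [hOmega v, abs_neg]
  calc |∫ t in Ioi v, deriv Ω₀ t| ≤ ∫ t in Ioi v, |deriv Ω₀ t| := by
        simpa [Real.norm_eq_abs] using
          norm_integral_le_integral_norm (μ := volume.restrict (Ioi v)) (deriv Ω₀)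
    _ ≤ ∫ t in Ioi v, K * Real.exp (-η * t) :=
        integral_mono (hDint v).abs ((exp_neg_integrableOn_Ioi v hη).const_mul K)
          (fun t => by rw [neg_mul]; exact hDbound t)
    _ = K / η * Real.exp (-(η * v)) := by
        rw [MeasureTheory.integral_const_mul, ZM.exp_integral hη v, neg_mul]
        ring

theorem zero_mode_decay (η : ℝ) (hη : η ∈ Set.Ioo (0 : ℝ) 1)
    (Γ₀ : ℝ → ℝ) (hcont : Continuous Γ₀)
    (hint : MeasureTheory.Integrable (fun w : ℝ => Γ₀ w ^ 2 * Real.cosh w ^ (2 * η)))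
    (Ω₀ : ℝ → ℝ) (hC2 : ContDiff ℝ 2 Ω₀)
    (hode : ∀ v : ℝ, deriv (deriv Ω₀) v = Γ₀ v)
    (htop : Filter.Tendsto Ω₀ Filter.atTop (nhds 0))
    (hbot : Filter.Tendsto Ω₀ Filter.atBot (nhds 0)) :
    ∀ η' ∈ Set.Ioo (0 : ℝ) (η / 4), ∃ C > (0 : ℝ), ∀ v : ℝ,
      |Ω₀ v| ≤ C * Real.cosh v ^ (-(η - η')) := by
  obtain ⟨hη0, hη1⟩ := hη
  intro η' hη'
  obtain ⟨hη'0, hη'4⟩ := hη'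
  obtain ⟨K₁, hK₁, h₁⟩ := ZM.one_sided η hη0 hη1 Γ₀ hcont hint Ω₀ hC2 hode htop
  have hcont1 : Continuous (fun w : ℝ => Γ₀ (-w)) := hcont.comp continuous_neg
  have hint1 : Integrable (fun w : ℝ => Γ₀ (-w) ^ 2 * Real.cosh w ^ (2 * η)) := by
    have := hint.comp_neg
    simpa [Real.cosh_neg] using this
  have hC21 : ContDiff ℝ 2 (fun v : ℝ => Ω₀ (-v)) := hC2.comp contDiff_neg
  have hd : deriv (fun v : ℝ => Ω₀ (-v)) = fun v => -deriv Ω₀ (-v) :=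
    funext fun v => deriv_comp_neg Ω₀ v
  have hode1 : ∀ v : ℝ, deriv (deriv (fun v : ℝ => Ω₀ (-v))) v = Γ₀ (-v) := by
    intro v
    rw [hd]
    have h2 : deriv (fun v : ℝ => -deriv Ω₀ (-v)) v
        = -deriv (fun v : ℝ => deriv Ω₀ (-v)) v := deriv.neg
    rw [h2, deriv_comp_neg (deriv Ω₀)]
    rw [hode]; ring
  have htop1 : Tendsto (fun v : ℝ => Ω₀ (-v)) atTop (nhds 0) :=
    hbot.comp tendsto_neg_atTop_atBot
  obtain ⟨K₂, hK₂, h₂⟩ := ZM.one_sided η hη0 hη1 _ hcont1 hint1 _ hC21 hode1 htop1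
  have hCpos : (0 : ℝ) < max K₁ K₂ := lt_max_of_lt_left hK₁
  refine ⟨max K₁ K₂, hCpos, fun v => ?_⟩
  have habs : |Ω₀ v| ≤ max K₁ K₂ * Real.exp (-(η * |v|)) := by
    rcases le_or_gt 0 v with h | h
    · have h3 := h₁ v
      rw [abs_of_nonneg h]
      exact h3.trans (mul_le_mul_of_nonneg_right (le_max_left _ _) (Real.exp_pos _).le)
    · have h3 := h₂ (-v)
      simp only [neg_neg] at h3
      rw [abs_of_neg h]
      refine le_trans ?_ (mul_le_mul_of_nonneg_right (le_max_right K₁ K₂) (Real.exp_pos _).le)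
      exact h3
  refine habs.trans (mul_le_mul_of_nonneg_left ?_ hCpos.le)
  have hc : Real.cosh v ^ (η - η') ≤ Real.exp (η * |v|) := by
    calc Real.cosh v ^ (η - η') ≤ (Real.exp |v|) ^ (η - η') :=
          Real.rpow_le_rpow (Real.cosh_pos v).le (ZM.cosh_le_exp_abs v) (by linarith)
      _ = Real.exp (|v| * (η - η')) := (Real.exp_mul _ _).symm
      _ ≤ Real.exp (η * |v|) := Real.exp_le_exp.mpr (by nlinarith [abs_nonneg v])
  have hp : (0 : ℝ) < Real.cosh v ^ (η - η') := Real.rpow_pos_of_pos (Real.cosh_pos v) _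
  rw [Real.rpow_neg (Real.cosh_pos v).le, Real.exp_neg]
  exact inv_anti₀ hp hc

end ZMhelpers
end
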